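/- Let λ, τ be real numbers with 0 < τ < λ, k := τ/λ, θ⋆ := 2π − arcsin k, and h(θ) := λ cos θ − τ θ − (λ cos θ⋆ − τ θ⋆). On the interval (θ⋆ − 2π, θ⋆), h is strictly decreasing on (θ⋆ − 2π, 3π − θ⋆) and strictly increasing on (3π − θ⋆, θ⋆); moreover h(θ⋆ − 2π) = 2πτ > 0, h(3π − θ⋆) < 0, and h(θ⋆) = 0. -/

import Mathlib

open Real Set

lemma sin_lt_sin_aux {b θ : ℝ} (hb : -(Real.pi/2) ≤ b) (h1 : b < θ)
    (h2 : θ < Real.pi - b) : Real.sin b < Real.sin θ := by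
  rcases le_or_gt θ (Real.pi/2) with hle | hgt
  · exact Real.strictMonoOn_sin ⟨hb, h1.le.trans hle⟩ ⟨hb.trans h1.le, hle⟩ h1
  · rw [← Real.sin_pi_sub θ]
    exact Real.strictMonoOn_sin ⟨hb, by linarith⟩ ⟨by linarith, by linarith⟩ (by linarith)

theorem stmt1 (lam tau k θs : ℝ) (htau : 0 < tau) (htl : tau < lam)
    (hk : k = tau / lam) (hθs : θs = 2 * Real.pi - Real.arcsin k)
    (h : ℝ → ℝ)
    (hdef : ∀ θ, h θ = lam * Real.cos θ - tau * θ - (lam * Real.cos θs - tau * θs)) :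
    StrictAntiOn h (Set.Ioo (θs - 2 * Real.pi) (3 * Real.pi - θs)) ∧
    StrictMonoOn h (Set.Ioo (3 * Real.pi - θs) θs) ∧
    h (θs - 2 * Real.pi) = 2 * Real.pi * tau ∧
    0 < 2 * Real.pi * tau ∧
    h (3 * Real.pi - θs) < 0 ∧
    h θs = 0 := by
  have hlam : 0 < lam := htau.trans htl
  have hk0 : 0 < k := by rw [hk]; positivity
  have hk1 : k < 1 := by rw [hk, div_lt_one hlam]; exact htl
  set a := Real.arcsin k with ha
  have ha0 : 0 < a := Real.arcsin_pos.mpr hk0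
  have ha2 : a < Real.pi/2 := Real.arcsin_lt_pi_div_two.mpr hk1
  have hpi := Real.pi_pos
  have hsina : Real.sin a = k := Real.sin_arcsin (by linarith) hk1.le
  have hlk : lam * k = tau := by rw [hk]; field_simp
  have e1 : θs - 2 * Real.pi = -a := by rw [hθs]; ring
  have e2 : 3 * Real.pi - θs = Real.pi + a := by rw [hθs]; ring
  have hfun : h = fun θ => lam * Real.cos θ - tau * θ - (lam * Real.cos θs - tau * θs) :=
    funext hdef
  have hderiv : ∀ x : ℝ, HasDerivAt h (-lam * Real.sin x - tau) x := by
    intro x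
    rw [hfun]
    have h1 := (Real.hasDerivAt_cos x).const_mul lam
    have h2 := (hasDerivAt_id x).const_mul tau
    have h3 := (h1.sub h2).sub_const (lam * Real.cos θs - tau * θs)
    exact h3.congr_deriv (by ring)
  have hcont : Continuous h := by
    rw [hfun]; fun_prop
  have hanti : StrictAntiOn h (Set.Icc (θs - 2 * Real.pi) (3 * Real.pi - θs)) := by
    apply strictAntiOn_of_deriv_neg (convex_Icc _ _) hcont.continuousOn
    intro x hx
    rw [interior_Icc, e1, e2] at hx
    rw [(hderiv x).deriv]
    have hsin : Real.sin (-a) < Real.sin x :=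
      sin_lt_sin_aux (by linarith) hx.1 (by have := hx.2; linarith)
    rw [Real.sin_neg, hsina] at hsin
    have := mul_lt_mul_of_pos_left hsin hlam
    nlinarith
  have hmono : StrictMonoOn h (Set.Icc (3 * Real.pi - θs) θs) := by
    apply strictMonoOn_of_deriv_pos (convex_Icc _ _) hcont.continuousOn
    intro x hx
    rw [interior_Icc, e2, hθs] at hx
    rw [(hderiv x).deriv]
    have hsin : Real.sin a < Real.sin (x - Real.pi) :=
      sin_lt_sin_aux (by linarith) (by have := hx.1; linarith) (by have := hx.2; linarith)
    rw [Real.sin_sub_pi, hsina] at hsin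
    have := mul_lt_mul_of_pos_left hsin hlam
    nlinarith
  have hθs0 : h θs = 0 := by rw [hdef]; ring
  have hval : h (θs - 2 * Real.pi) = 2 * Real.pi * tau := by
    rw [hdef, Real.cos_sub_two_pi]; ring
  have hlt : h (3 * Real.pi - θs) < 0 := by
    have hab : 3 * Real.pi - θs < θs := by rw [e2, hθs]; linarith
    have := hmono ⟨le_refl _, hab.le⟩ ⟨hab.le, le_refl _⟩ hab
    rwa [hθs0] at this
  exact ⟨hanti.mono Set.Ioo_subset_Icc_self, hmono.mono Set.Ioo_subset_Icc_self,
    hval, by positivity, hlt, hθs0⟩
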